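/- For a finite group G, the mark homomorphism φ : A(G) → ∏_{(H)} ℤ is injective. -/

import Mathlib

open MulAction

section Aux

variable {G : Type} [Group G]

/-- An equivariant equivalence induces an equivalence on fixed points of any subgroup. -/
def fixedCongr {X Y : Type} [MulAction G X] [MulAction G Y] (e : X ≃ Y)
    (he : ∀ (g : G) (x : X), e (g • x) = g • e x) (K : Subgroup G) :
    fixedPoints K X ≃ fixedPoints K Y :=
  Equiv.subtypeEquiv e <| by
    intro x
    constructor
    · intro hx k
      rw [Subgroup.smul_def, ← he, ← Subgroup.smul_def, hx k]
    · intro hx k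
      apply e.injective
      rw [Subgroup.smul_def, he, ← Subgroup.smul_def, hx k]

lemma equivariant_of_symm {A B : Type} [SMul G A] [SMul G B] (e : A ≃ B)
    (he : ∀ (g : G) (b : B), e.symm (g • b) = g • e.symm b) :
    ∀ (g : G) (a : A), e (g • a) = g • e a := by
  intro g a
  apply e.symm.injective
  rw [e.symm_apply_apply, he, e.symm_apply_apply]

lemma orbitEquiv_symm_smul {X : Type} [MulAction G X] (x : X) (g : G)
    (q : G ⧸ stabilizer G x) :
    (orbitEquivQuotientStabilizer G x).symm (g • q)
      = g • (orbitEquivQuotientStabilizer G x).symm q := by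
  induction q using QuotientGroup.induction_on with
  | H a =>
    apply Subtype.ext
    have h1 : (g • ((a : G ⧸ stabilizer G x))) = ((g * a : G) : G ⧸ stabilizer G x) := rfl
    rw [h1, orbitEquivQuotientStabilizer_symm_apply, orbit.coe_smul,
      orbitEquivQuotientStabilizer_symm_apply, mul_smul]

/-- Orbits with equal stabilizers are equivariantly equivalent. -/
lemma orbit_equiv_of_stab_eq {X Y : Type} [MulAction G X] [MulAction G Y]
    (x : X) (y : Y) (hst : stabilizer G x = stabilizer G y) :
    ∃ e : ↥(orbit G x) ≃ ↥(orbit G y),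
      ∀ (g : G) (z : ↥(orbit G x)), e (g • z) = g • e z := by
  refine ⟨(orbitEquivQuotientStabilizer G x).trans
    ((Subgroup.quotientEquivOfEq hst).trans (orbitEquivQuotientStabilizer G y).symm), ?_⟩
  intro g z
  simp only [Equiv.trans_apply]
  rw [equivariant_of_symm _ (orbitEquiv_symm_smul x) g z]
  have hq : ∀ (q : G ⧸ stabilizer G x),
      Subgroup.quotientEquivOfEq hst (g • q) = g • Subgroup.quotientEquivOfEq hst q := by
    intro q
    induction q using QuotientGroup.induction_on with
    | H a => rfl
  rw [hq, orbitEquiv_symm_smul y]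

/-- The action on an invariant subset. -/
def invariantAction {X : Type} [MulAction G X] (s : Set X)
    (hs : ∀ (g : G), ∀ z ∈ s, g • z ∈ s) : MulAction G ↥s where
  smul g z := ⟨g • (z : X), hs g z z.2⟩
  one_smul z := Subtype.ext (one_smul G (z : X))
  mul_smul g h z := Subtype.ext (mul_smul g h (z : X))

/-- Fixed points of an invariant subset, as a subtype of the fixed points of the whole set. -/
def fixedSetEquiv {X : Type} [MulAction G X] (s : Set X) [MulAction G ↥s]
    (hcoe : ∀ (g : G) (z : ↥s), ((g • z : ↥s) : X) = g • (z : X)) (K : Subgroup G) :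
    fixedPoints K ↥s ≃ {w : fixedPoints K X // (w : X) ∈ s} where
  toFun z := ⟨⟨(z : ↥s), fun k => by
      rw [Subgroup.smul_def, ← hcoe]
      exact congrArg Subtype.val (z.2 k)⟩, (z : ↥s).2⟩
  invFun w := ⟨⟨((w : fixedPoints K X) : X), w.2⟩, fun k => Subtype.ext <| by
      show (((k : G) • (⟨((w : fixedPoints K X) : X), w.2⟩ : ↥s) : ↥s) : X)
        = ((w : fixedPoints K X) : X)
      rw [hcoe, ← Subgroup.smul_def]
      exact (w : fixedPoints K X).2 k⟩
  left_inv z := rfl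
  right_inv w := rfl

lemma card_fixed_decomp {X : Type} [Finite X] [MulAction G X] (s : Set X)
    [MulAction G ↥s] [MulAction G ↥(sᶜ : Set X)]
    (hcoe : ∀ (g : G) (z : ↥s), ((g • z : ↥s) : X) = g • (z : X))
    (hcoe' : ∀ (g : G) (z : ↥(sᶜ : Set X)), ((g • z : ↥(sᶜ : Set X)) : X) = g • (z : X))
    (K : Subgroup G) :
    Nat.card (fixedPoints K X)
      = Nat.card (fixedPoints K ↥s) + Nat.card (fixedPoints K ↥(sᶜ : Set X)) := by
  classical
  have h1 : Nat.card (fixedPoints K X)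
      = Nat.card ({w : fixedPoints K X // (w : X) ∈ s}
        ⊕ {w : fixedPoints K X // ¬ (w : X) ∈ s}) :=
    Nat.card_congr (Equiv.sumCompl fun w : fixedPoints K X => (w : X) ∈ s).symm
  rw [h1, Nat.card_sum]
  congr 1
  · exact Nat.card_congr (fixedSetEquiv s hcoe K).symm
  · exact Nat.card_congr ((fixedSetEquiv (sᶜ : Set X) hcoe' K).trans
      (Equiv.subtypeEquivRight fun w => by simp)).symm

lemma card_fixed_bot {X : Type} [MulAction G X] :
    Nat.card (fixedPoints (⊥ : Subgroup G) X) = Nat.card X := by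
  have : fixedPoints (⊥ : Subgroup G) X = Set.univ := by
    refine Set.eq_univ_of_forall fun x k => ?_
    rw [Subgroup.smul_def, Subgroup.mem_bot.mp k.2, one_smul]
  rw [this]
  exact Nat.card_congr (Equiv.Set.univ X)

theorem gset_aux : ∀ (n : ℕ) (G : Type) [Group G] [Finite G] (X Y : Type) [Finite X] [Finite Y]
    [MulAction G X] [MulAction G Y], Nat.card X = n →
    (∀ H : Subgroup G, Nat.card (fixedPoints H X) = Nat.card (fixedPoints H Y)) →
    ∃ e : X ≃ Y, ∀ (g : G) (x : X), e (g • x) = g • e x := by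
  intro n
  induction n using Nat.strong_induction_on with
  | _ n ih =>
  intro G _ _ X Y _ _ _ _ hn h
  classical
  rcases Nat.eq_zero_or_pos n with hn0 | hnpos
  · -- X and Y are empty
    subst hn0
    have hX : IsEmpty X :=
      (Nat.card_eq_zero.mp hn).resolve_right fun hi => absurd ‹Finite X› (@not_finite X hi).elim
    have hYcard : Nat.card Y = 0 := by
      rw [← card_fixed_bot (G := G), ← h ⊥, card_fixed_bot]; exact hn
    have hY : IsEmpty Y :=
      (Nat.card_eq_zero.mp hYcard).resolve_right fun hi => absurd ‹Finite Y› (@not_finite Y hi).elim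
    exact ⟨Equiv.equivOfIsEmpty X Y, fun g x => isEmptyElim x⟩
  · -- pick a maximal subgroup with nonempty fixed points
    have hXne : Nonempty X := (Nat.card_pos_iff.mp (hn ▸ hnpos)).1
    set S : Set (Subgroup G) := {K : Subgroup G | (fixedPoints K X).Nonempty} with hS
    have hbot : (⊥ : Subgroup G) ∈ S := by
      obtain ⟨x₀⟩ := hXne
      exact ⟨x₀, fun k => by rw [Subgroup.smul_def, Subgroup.mem_bot.mp k.2, one_smul]⟩
    obtain ⟨H, hHS, hmax⟩ := Set.Finite.exists_maximalFor (fun K : Subgroup G => Nat.card K)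
      S (Set.toFinite S) ⟨⊥, hbot⟩
    obtain ⟨x, hx⟩ := hHS
    -- the stabilizer of x is H
    have hHx : H ≤ stabilizer G x := fun g hg => by
      have := hx ⟨g, hg⟩
      rwa [Subgroup.smul_def] at this
    have hxS : stabilizer G x ∈ S := ⟨x, fun k => by rw [Subgroup.smul_def]; exact k.2⟩
    have hstabx : stabilizer G x = H :=
      (Subgroup.eq_of_le_of_card_ge hHx (hmax hxS (Subgroup.card_le_of_le hHx))).symm
    -- find y with stabilizer H
    have hYH : (fixedPoints H Y).Nonempty := by
      have hpos : 0 < Nat.card (fixedPoints H Y) := by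
        rw [← h]
        exact Nat.card_pos_iff.mpr ⟨Set.nonempty_coe_sort.mpr ⟨x, hx⟩, Set.toFinite _⟩
      exact Set.nonempty_coe_sort.mp (Nat.card_pos_iff.mp hpos).1
    obtain ⟨y, hy⟩ := hYH
    have hHy : H ≤ stabilizer G y := fun g hg => by
      have := hy ⟨g, hg⟩
      rwa [Subgroup.smul_def] at this
    have hyS : stabilizer G y ∈ S := by
      have hne : (fixedPoints (stabilizer G y) Y).Nonempty :=
        ⟨y, fun k => by rw [Subgroup.smul_def]; exact k.2⟩
      have hpos : 0 < Nat.card (fixedPoints (stabilizer G y) X) := by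
        rw [h]
        exact Nat.card_pos_iff.mpr ⟨Set.nonempty_coe_sort.mpr hne, Set.toFinite _⟩
      exact Set.nonempty_coe_sort.mp (Nat.card_pos_iff.mp hpos).1
    have hstaby : stabilizer G y = H :=
      (Subgroup.eq_of_le_of_card_ge hHy (hmax hyS (Subgroup.card_le_of_le hHy))).symm
    -- equivariant equivalence of the two orbits
    obtain ⟨e₀, he₀⟩ := orbit_equiv_of_stab_eq x y (hstabx.trans hstaby.symm)
    -- actions on the complements of the orbits
    have hinvX : ∀ (g : G), ∀ z ∈ (orbit G x)ᶜ, g • z ∈ (orbit G x)ᶜ := by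
      intro g z hz hc
      obtain ⟨a, ha⟩ := MulAction.mem_orbit_iff.mp hc
      exact hz ⟨g⁻¹ * a, by show (g⁻¹ * a) • x = z; rw [mul_smul, ha, inv_smul_smul]⟩
    have hinvY : ∀ (g : G), ∀ z ∈ (orbit G y)ᶜ, g • z ∈ (orbit G y)ᶜ := by
      intro g z hz hc
      obtain ⟨a, ha⟩ := MulAction.mem_orbit_iff.mp hc
      exact hz ⟨g⁻¹ * a, by show (g⁻¹ * a) • y = z; rw [mul_smul, ha, inv_smul_smul]⟩
    letI iX : MulAction G ↥((orbit G x)ᶜ : Set X) := invariantAction _ hinvX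
    letI iY : MulAction G ↥((orbit G y)ᶜ : Set Y) := invariantAction _ hinvY
    -- count decompositions
    have hdX := card_fixed_decomp (G := G) (orbit G x)
      (fun g z => orbit.coe_smul) (fun g z => rfl)
    have hdY := card_fixed_decomp (G := G) (orbit G y)
      (fun g z => orbit.coe_smul) (fun g z => rfl)
    have horb : ∀ K : Subgroup G,
        Nat.card (fixedPoints K ↥(orbit G x)) = Nat.card (fixedPoints K ↥(orbit G y)) :=
      fun K => Nat.card_congr (fixedCongr e₀ he₀ K)
    have h' : ∀ K : Subgroup G,
        Nat.card (fixedPoints K ↥((orbit G x)ᶜ : Set X))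
          = Nat.card (fixedPoints K ↥((orbit G y)ᶜ : Set Y)) := by
      intro K
      have h1 := hdX K
      have h2 := hdY K
      have h3 := h K
      have h4 := horb K
      omega
    -- the complement is strictly smaller
    have hcards : Nat.card X = Nat.card ↥(orbit G x) + Nat.card ↥((orbit G x)ᶜ : Set X) := by
      classical
      rw [← Nat.card_sum]
      exact Nat.card_congr (Equiv.Set.sumCompl (orbit G x)).symm
    have horbpos : 0 < Nat.card ↥(orbit G x) :=
      Nat.card_pos_iff.mpr ⟨⟨⟨x, mem_orbit_self x⟩⟩, Set.toFinite _⟩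
    have hlt : Nat.card ↥((orbit G x)ᶜ : Set X) < n := by omega
    obtain ⟨e₁, he₁⟩ := ih _ hlt G ↥((orbit G x)ᶜ : Set X) ↥((orbit G y)ᶜ : Set Y) rfl h'
    -- assemble the equivalence
    classical
    refine ⟨(Equiv.Set.sumCompl (orbit G x)).symm.trans
      ((e₀.sumCongr e₁).trans (Equiv.Set.sumCompl (orbit G y))), ?_⟩
    intro g z
    simp only [Equiv.trans_apply]
    by_cases hz : z ∈ orbit G x
    · have hgz : g • z ∈ orbit G x := by
        obtain ⟨a, ha⟩ := MulAction.mem_orbit_iff.mp hz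
        exact ⟨g * a, by show (g * a) • x = g • z; rw [mul_smul, ha]⟩
      rw [Equiv.Set.sumCompl_symm_apply_of_mem hz, Equiv.Set.sumCompl_symm_apply_of_mem hgz]
      have : (⟨g • z, hgz⟩ : ↥(orbit G x)) = g • (⟨z, hz⟩ : ↥(orbit G x)) :=
        Subtype.ext ((orbit.coe_smul (a' := (⟨z, hz⟩ : ↥(orbit G x)))).symm)
      rw [this]
      simp only [Equiv.sumCongr_apply, Sum.map_inl, Equiv.Set.sumCompl_apply_inl]
      rw [he₀]
      exact orbit.coe_smul
    · have hgz : g • z ∉ orbit G x := hinvX g z hz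
      rw [Equiv.Set.sumCompl_symm_apply_of_notMem hz,
        Equiv.Set.sumCompl_symm_apply_of_notMem hgz]
      have : (⟨g • z, hgz⟩ : ↥((orbit G x)ᶜ : Set X)) = g • (⟨z, hz⟩ : ↥((orbit G x)ᶜ : Set X)) :=
        rfl
      rw [this]
      simp only [Equiv.sumCongr_apply, Sum.map_inr, Equiv.Set.sumCompl_apply_inr]
      rw [he₁]
      rfl

end Aux

/-- For a finite group `G`, the mark homomorphism of the Burnside ring is
injective.  Equivalently (as stated here): if two finite `G`-sets `X, Y` satisfy
`|X^H| = |Y^H|` for all subgroups `H ≤ G`, then `X` and `Y` are `G`-isomorphic. -/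
theorem gset_iso_of_card_fixedPoints_eq (G : Type) [Group G] [Finite G]
    (X Y : Type) [Finite X] [Finite Y] [MulAction G X] [MulAction G Y]
    (h : ∀ H : Subgroup G, Nat.card (fixedPoints H X) = Nat.card (fixedPoints H Y)) :
    ∃ e : X ≃ Y, ∀ (g : G) (x : X), e (g • x) = g • e x :=
  gset_aux (Nat.card X) G X Y rfl h
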